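/- For every positive integer n, the sum over i = 0,...,n of sqrt( 2^{-n} * C(n,i) ) is at most (2*pi*n)^{1/4}. -/

import Mathlib

open Real MeasureTheory Finset
set_option maxHeartbeats 1000000

lemma exp_quad_le {a : ℝ} (ha : 0 < a) (r x : ℝ) :
    Real.exp (-a * (x + r) ^ 2) ≤ Real.exp (1/(4*a) - r) * Real.exp (-x) := by
  rw [← Real.exp_add]
  apply Real.exp_le_exp.mpr
  have h4 : (1/(4*a)) * (4*a) = 1 := by field_simp
  nlinarith [sq_nonneg (2*a*(x+r) - 1), ha]

lemma summable_gauss_shift {a : ℝ} (ha : 0 < a) (r : ℝ) :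
    Summable fun k : ℤ => Real.exp (-a * ((k : ℝ) + r) ^ 2) := by
  apply Summable.of_nat_of_neg_add_one
  · apply Summable.of_nonneg_of_le (fun n => (Real.exp_pos _).le)
      (fun n => by simpa using exp_quad_le ha r (n : ℝ))
    simpa using (Real.summable_exp_neg_nat).mul_left (Real.exp (1/(4*a) - r))
  · apply Summable.of_nonneg_of_le (fun n => (Real.exp_pos _).le)
      (f := fun n : ℕ => Real.exp (1/(4*a) + r) * Real.exp (-((n:ℝ)+1)))
    · intro n
      have h1 : ((((-((n:ℤ) + 1)) : ℤ) : ℝ) + r) ^ 2 = (((n:ℝ)+1) + (-r)) ^ 2 := by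
        push_cast; ring
      have := exp_quad_le ha (-r) ((n:ℝ)+1)
      rw [h1]
      simpa [sub_neg_eq_add] using this
    · apply Summable.mul_left
      apply Summable.of_nonneg_of_le (fun n => (Real.exp_pos _).le)
        (f := fun n : ℕ => Real.exp (-(n:ℝ)))
      · intro n; apply Real.exp_le_exp.mpr; linarith
      · exact Real.summable_exp_neg_nat

lemma theta_shift_le {a : ℝ} (ha : 0 < a) (r : ℝ) :
    ∑' k : ℤ, Real.exp (-(π * a) * ((k : ℝ) + r) ^ 2)
      ≤ (Real.sqrt a)⁻¹ * ∑' k : ℤ, Real.exp (-(π / a) * (k : ℝ) ^ 2) := by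
  have hπa : 0 < π * a := mul_pos Real.pi_pos ha
  have hπd : 0 < π / a := div_pos Real.pi_pos ha
  set b : ℝ := -(a * r) with hb
  have key := Complex.tsum_exp_neg_quadratic (a := (a : ℂ))
    (by simpa using ha) (b := (b : ℂ))
  have hL : ∀ k : ℤ, Complex.exp (-(π:ℂ) * a * (k:ℂ) ^ 2 + 2 * π * b * k)
      = (Real.exp (π * a * r ^ 2) : ℂ) * (Real.exp (-(π * a) * ((k:ℝ) + r) ^ 2) : ℂ) := by
    intro k
    have h0 : (-(π:ℂ) * a * (k:ℂ) ^ 2 + 2 * π * b * k)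
        = ((π * a * r ^ 2 + -(π * a) * ((k:ℝ) + r) ^ 2 : ℝ) : ℂ) := by
      push_cast [hb]; ring
    rw [h0, Complex.ofReal_add, Complex.exp_add, Complex.ofReal_exp, Complex.ofReal_exp]
  have hsum := summable_gauss_shift hπa r
  have hLHS : (∑' k : ℤ, Complex.exp (-(π:ℂ) * a * (k:ℂ) ^ 2 + 2 * π * b * k))
      = (Real.exp (π * a * r ^ 2) : ℂ)
        * ((∑' k : ℤ, Real.exp (-(π * a) * ((k:ℝ) + r) ^ 2) : ℝ) : ℂ) := by
    simp_rw [hL]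
    rw [tsum_mul_left, Complex.ofReal_tsum]
  have hnorm : ∀ k : ℤ, ‖Complex.exp (-(π:ℂ) / a * ((k:ℂ) + Complex.I * b) ^ 2)‖
      = Real.exp (π * a * r ^ 2) * Real.exp (-(π / a) * (k:ℝ) ^ 2) := by
    intro k
    set A : ℝ := -(π/a) * ((k:ℝ)^2 - b^2) with hA
    set B : ℝ := -(π/a) * (2*(k:ℝ)*b) with hB
    have hz : (-(π:ℂ) / a * ((k:ℂ) + Complex.I * b) ^ 2) = (A : ℂ) + (B : ℂ) * Complex.I := by
      rw [hA, hB]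
      push_cast
      ring_nf
      rw [Complex.I_sq]
      ring
    rw [Complex.norm_exp, hz]
    have hre : ((A : ℂ) + (B : ℂ) * Complex.I).re = A := by simp
    rw [hre, ← Real.exp_add]
    congr 1
    rw [hA]
    have hb2 : b ^ 2 = a ^ 2 * r ^ 2 := by rw [hb]; ring
    rw [hb2]
    field_simp
    ring
  have hsumnorm : Summable fun k : ℤ =>
      ‖Complex.exp (-(π:ℂ) / a * ((k:ℂ) + Complex.I * b) ^ 2)‖ := by
    simp_rw [hnorm]
    exact ((by simpa using (summable_gauss_shift hπd 0)) : Summable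
      fun k : ℤ => Real.exp (-(π / a) * (k:ℝ) ^ 2)).mul_left _
  have h2 : ‖(1 : ℂ) / (a:ℂ) ^ (1/2 : ℂ)‖ = (Real.sqrt a)⁻¹ := by
    have h3 : ((a:ℂ) ^ (1/2 : ℂ)) = ((Real.sqrt a : ℝ) : ℂ) := by
      rw [Real.sqrt_eq_rpow, Complex.ofReal_cpow ha.le]; norm_num
    rw [norm_div, norm_one, h3, Complex.norm_real,
      Real.norm_of_nonneg (Real.sqrt_nonneg a), one_div]
  have habs : Real.exp (π * a * r ^ 2) * ∑' k : ℤ, Real.exp (-(π * a) * ((k:ℝ) + r) ^ 2)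
      ≤ (Real.sqrt a)⁻¹ * (Real.exp (π * a * r ^ 2)
          * ∑' k : ℤ, Real.exp (-(π / a) * (k:ℝ) ^ 2)) := by
    have h1 : Real.exp (π * a * r ^ 2) * ∑' k : ℤ, Real.exp (-(π * a) * ((k:ℝ) + r) ^ 2)
        = ‖(∑' k : ℤ, Complex.exp (-(π:ℂ) * a * (k:ℂ) ^ 2 + 2 * π * b * k))‖ := by
      rw [hLHS, norm_mul, Complex.norm_real, Complex.norm_real,
        Real.norm_of_nonneg (Real.exp_pos _).le,
        Real.norm_of_nonneg (tsum_nonneg fun k => (Real.exp_pos _).le)]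
    rw [h1, key, norm_mul, h2]
    apply mul_le_mul_of_nonneg_left _ (inv_nonneg.mpr (Real.sqrt_nonneg a))
    calc ‖∑' k : ℤ, Complex.exp (-(π:ℂ) / a * ((k:ℂ) + Complex.I * b) ^ 2)‖
        ≤ ∑' k : ℤ, ‖Complex.exp (-(π:ℂ) / a * ((k:ℂ) + Complex.I * b) ^ 2)‖ :=
          norm_tsum_le_tsum_norm hsumnorm
      _ = Real.exp (π * a * r ^ 2) * ∑' k : ℤ, Real.exp (-(π / a) * (k:ℝ) ^ 2) := by
          simp_rw [hnorm]; rw [tsum_mul_left]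
  have hepos := Real.exp_pos (π * a * r ^ 2)
  calc ∑' k : ℤ, Real.exp (-(π * a) * ((k:ℝ) + r) ^ 2)
      = (Real.exp (π * a * r ^ 2))⁻¹
        * (Real.exp (π * a * r ^ 2) * ∑' k : ℤ, Real.exp (-(π * a) * ((k:ℝ) + r) ^ 2)) := by
        field_simp
    _ ≤ (Real.exp (π * a * r ^ 2))⁻¹ * ((Real.sqrt a)⁻¹ * (Real.exp (π * a * r ^ 2)
          * ∑' k : ℤ, Real.exp (-(π / a) * (k:ℝ) ^ 2))) := by
        apply mul_le_mul_of_nonneg_left habs (by positivity)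
    _ = (Real.sqrt a)⁻¹ * ∑' k : ℤ, Real.exp (-(π / a) * (k:ℝ) ^ 2) := by
        field_simp

lemma tsum_gauss_le {c : ℝ} (hc : 1 ≤ c) :
    ∑' k : ℤ, Real.exp (-c * (k : ℝ) ^ 2) ≤ 1 + 4 * Real.exp (-c) := by
  have hc0 : 0 < c := by linarith
  have hsum : Summable fun k : ℤ => Real.exp (-c * (k : ℝ) ^ 2) := by
    simpa using summable_gauss_shift hc0 0
  have hs1 : Summable fun n : ℕ => Real.exp (-c * (n : ℝ) ^ 2) := by
    have h := hsum.comp_injective (Nat.cast_injective : Function.Injective ((↑) : ℕ → ℤ))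
    simpa [Function.comp_def] using h
  have hexplt : Real.exp (-c) < 1 := Real.exp_lt_one_iff.mpr (by linarith)
  have hgeo0 : Summable fun n : ℕ => Real.exp (-c) ^ n :=
    summable_geometric_of_lt_one (Real.exp_pos _).le hexplt
  have hgeo : Summable fun n : ℕ => Real.exp (-c) ^ (n + 1) := by
    simp_rw [pow_succ']
    exact hgeo0.mul_left _
  have hle : ∀ n : ℕ, Real.exp (-c * ((n : ℝ) + 1) ^ 2) ≤ Real.exp (-c) ^ (n + 1) := by
    intro n
    rw [← Real.exp_nat_mul]
    apply Real.exp_le_exp.mpr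
    push_cast
    nlinarith [mul_nonneg (mul_nonneg hc0.le (Nat.cast_nonneg (α := ℝ) n))
      (add_nonneg (Nat.cast_nonneg (α := ℝ) n) zero_le_one)]
  have hs2 : Summable fun n : ℕ => Real.exp (-c * ((n : ℝ) + 1) ^ 2) :=
    Summable.of_nonneg_of_le (fun n => (Real.exp_pos _).le) hle hgeo
  have hsplit : (∑' k : ℤ, Real.exp (-c * (k : ℝ) ^ 2))
      = (∑' n : ℕ, Real.exp (-c * (n : ℝ) ^ 2))
        + ∑' n : ℕ, Real.exp (-c * ((n : ℝ) + 1) ^ 2) := by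
    rw [tsum_of_nat_of_neg_add_one (by simpa using hs1)
      (hs2.congr fun n => by apply congrArg; push_cast; ring)]
    congr 1
    · exact tsum_congr fun n => by apply congrArg; push_cast; ring
  have hsplit2 : (∑' n : ℕ, Real.exp (-c * (n : ℝ) ^ 2))
      = 1 + ∑' n : ℕ, Real.exp (-c * ((n : ℝ) + 1) ^ 2) := by
    rw [Summable.tsum_eq_zero_add hs1]
    norm_num
  have htail : (∑' n : ℕ, Real.exp (-c * ((n : ℝ) + 1) ^ 2)) ≤ 2 * Real.exp (-c) := by
    calc (∑' n : ℕ, Real.exp (-c * ((n : ℝ) + 1) ^ 2))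
        ≤ ∑' n : ℕ, Real.exp (-c) ^ (n + 1) := Summable.tsum_le_tsum hle hs2 hgeo
      _ = Real.exp (-c) * ∑' n : ℕ, Real.exp (-c) ^ n := by
          simp_rw [pow_succ']; rw [tsum_mul_left]
      _ = Real.exp (-c) * (1 - Real.exp (-c))⁻¹ := by
          rw [tsum_geometric_of_lt_one (Real.exp_pos _).le hexplt]
      _ ≤ Real.exp (-c) * 2 := by
          apply mul_le_mul_of_nonneg_left _ (Real.exp_pos _).le
          have he : Real.exp (-c) ≤ Real.exp (-1) := Real.exp_le_exp.mpr (by linarith)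
          have he2 : Real.exp (-1) ≤ 1/2 := by
            rw [Real.exp_neg, inv_le_comm₀ (Real.exp_pos 1) (by norm_num)]
            calc (1/2 : ℝ)⁻¹ = 2 := by norm_num
              _ ≤ Real.exp 1 := by linarith [Real.add_one_le_exp 1]
          have h12 : (1:ℝ)/2 ≤ 1 - Real.exp (-c) := by linarith
          calc (1 - Real.exp (-c))⁻¹ ≤ ((1:ℝ)/2)⁻¹ := by
                apply inv_anti₀ (by norm_num) h12
            _ = 2 := by norm_num
      _ = 2 * Real.exp (-c) := by ring
  linarith [hsplit, hsplit2, htail]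

lemma lemA (n : ℕ) (hn : 0 < n) :
    ∑ i ∈ range (n+1), Real.exp (-((2*(i:ℝ) - n)^2 / (4*n))) ≤ Real.sqrt (π * n) := by
  have hn0 : (0:ℝ) < n := by exact_mod_cast hn
  have hn1 : (1:ℝ) ≤ n := by exact_mod_cast hn
  set a : ℝ := (π * n)⁻¹ with ha_def
  have ha : 0 < a := by positivity
  have hπa : π * a = 1 / n := by
    rw [ha_def]; field_simp
  have hπa0 : 0 < π * a := by rw [hπa]; positivity
  set r : ℝ := -(n:ℝ)/2 with hr_def
  set f : ℤ → ℝ := fun k => Real.exp (-(π*a) * ((k:ℝ) + r) ^ 2) with hf_def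
  have hterm : ∀ i : ℕ, Real.exp (-((2*(i:ℝ) - n)^2 / (4*n))) = f (i : ℤ) := by
    intro i
    rw [hf_def]
    apply congrArg
    rw [hπa, hr_def]
    push_cast
    field_simp
    ring
  have hsummable : Summable f := summable_gauss_shift hπa0 r
  -- the finset with the two extra points
  set t : Finset ℤ := (range (n+1)).map Nat.castEmbedding with ht_def
  have hmem : ∀ k : ℤ, k ∈ t ↔ ∃ m : ℕ, m < n + 1 ∧ (m : ℤ) = k := by
    intro k; simp [ht_def, Finset.mem_map, Nat.castEmbedding]
  have h1 : ((n:ℤ)+1) ∉ t := by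
    rw [hmem]; rintro ⟨m, hm, hmk⟩; omega
  have h2 : (-1:ℤ) ∉ insert ((n:ℤ)+1) t := by
    simp only [Finset.mem_insert]
    rw [hmem]
    rintro (h | ⟨m, hm, hmk⟩) <;> omega
  have hsum_t : ∑ k ∈ t, f k = ∑ i ∈ range (n+1), Real.exp (-((2*(i:ℝ) - n)^2 / (4*n))) := by
    rw [ht_def, Finset.sum_map]
    exact Finset.sum_congr rfl fun i _ => (hterm i).symm
  have hins : ∑ k ∈ insert (-1:ℤ) (insert ((n:ℤ)+1) t), f k
      = f (-1) + f ((n:ℤ)+1) + ∑ k ∈ t, f k := by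
    rw [Finset.sum_insert h2, Finset.sum_insert h1]; ring
  have hle_tsum : ∑ k ∈ insert (-1:ℤ) (insert ((n:ℤ)+1) t), f k ≤ ∑' k, f k :=
    Summable.sum_le_tsum _ (fun k _ => (Real.exp_pos _).le) hsummable
  -- value of the extra terms
  set E : ℝ := Real.exp (-((n:ℝ)/2 + 1)^2 / n) with hE_def
  have hfm1 : f (-1) = E := by
    rw [hf_def, hE_def, hπa, hr_def]
    apply congrArg
    push_cast
    field_simp
    ring
  have hfn1 : f ((n:ℤ)+1) = E := by
    rw [hf_def, hE_def, hπa, hr_def]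
    apply congrArg
    push_cast
    field_simp
    ring
  -- theta bound
  have hsqrta : (Real.sqrt a)⁻¹ = Real.sqrt (π * n) := by
    rw [ha_def, Real.sqrt_inv, inv_inv]
  have hπdiva : π / a = π^2 * n := by
    rw [ha_def]; field_simp
  have hpi3 : (3:ℝ) < π := Real.pi_gt_three
  have hc1 : 1 ≤ π / a := by
    rw [hπdiva]; nlinarith
  have httail : (Real.sqrt a)⁻¹ * ∑' k : ℤ, Real.exp (-(π / a) * (k:ℝ) ^ 2)
      ≤ Real.sqrt (π * n) * (1 + 4 * Real.exp (-(π^2 * n))) := by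
    rw [hsqrta]
    apply mul_le_mul_of_nonneg_left _ (Real.sqrt_nonneg _)
    exact (tsum_gauss_le hc1).trans_eq (by rw [hπdiva])
  have htheta := (theta_shift_le ha r).trans httail
  -- final numeric comparison
  have hnum : Real.sqrt (π * n) * (4 * Real.exp (-(π^2 * n))) ≤ 2 * E := by
    have hs2n : Real.sqrt (π * n) ≤ 2 * n := by
      have h4 : π * n ≤ (2*n)^2 := by nlinarith [Real.pi_le_four]
      calc Real.sqrt (π * n) ≤ Real.sqrt ((2*n)^2) := Real.sqrt_le_sqrt h4
        _ = 2*n := Real.sqrt_sq (by positivity)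
    have hEq : -((n:ℝ)/2 + 1)^2 / n ≥ -(n/4 + 2) := by
      rw [ge_iff_le, neg_le, ← neg_div, neg_neg]
      rw [div_le_iff₀ hn0]
      have h1n : (1:ℝ) ≤ n := hn1
      nlinarith
    have hE_ge : Real.exp (-((n:ℝ)/4 + 2)) ≤ E := by
      rw [hE_def]; exact Real.exp_le_exp.mpr hEq
    have hkey : 2 * n * (4 * Real.exp (-(π^2 * n))) ≤ 2 * Real.exp (-((n:ℝ)/4 + 2)) := by
      have hpisq : (9:ℝ) ≤ π^2 := by nlinarith
      have hexp : (4:ℝ) * n ≤ Real.exp (π^2*n - (n/4 + 2)) := by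
        have harg : 4 * (n:ℝ) ≤ π^2*n - (n/4 + 2) := by
          nlinarith [mul_nonneg (by linarith : (0:ℝ) ≤ π^2 - 9) hn0.le]
        calc (4:ℝ) * n ≤ 1 + 4*n := by linarith
          _ ≤ Real.exp (4*n) := by linarith [Real.add_one_le_exp (4*(n:ℝ))]
          _ ≤ Real.exp (π^2*n - (n/4 + 2)) := Real.exp_le_exp.mpr harg
      have := mul_le_mul_of_nonneg_right hexp (Real.exp_pos (-(π^2*n))).le
      rw [← Real.exp_add] at this
      have heq : π^2*n - ((n:ℝ)/4 + 2) + -(π^2*n) = -(n/4+2) := by ring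
      rw [heq] at this
      linarith [this]
    calc Real.sqrt (π*n) * (4 * Real.exp (-(π^2*n)))
        ≤ 2*n * (4 * Real.exp (-(π^2*n))) := by
          apply mul_le_mul_of_nonneg_right hs2n (by positivity)
      _ ≤ 2 * Real.exp (-((n:ℝ)/4 + 2)) := hkey
      _ ≤ 2 * E := by linarith
  -- assemble
  have hfinal : E + E + ∑ i ∈ range (n+1), Real.exp (-((2*(i:ℝ) - n)^2 / (4*n)))
      ≤ Real.sqrt (π*n) * (1 + 4 * Real.exp (-(π^2*n))) := by
    calc E + E + ∑ i ∈ range (n+1), Real.exp (-((2*(i:ℝ) - n)^2 / (4*n)))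
        = ∑ k ∈ insert (-1:ℤ) (insert ((n:ℤ)+1) t), f k := by
          rw [hins, hfm1, hfn1, hsum_t]
      _ ≤ ∑' k, f k := hle_tsum
      _ ≤ Real.sqrt (π*n) * (1 + 4 * Real.exp (-(π^2*n))) := htheta
  have hdistrib : Real.sqrt (π*n) * (1 + 4 * Real.exp (-(π^2*n)))
      = Real.sqrt (π*n) + Real.sqrt (π*n) * (4 * Real.exp (-(π^2*n))) := by ring
  linarith [hfinal, hnum]

lemma integrable_exp_quad {b : ℝ} (hb : 0 < b) (c : ℝ) :
    Integrable fun x : ℝ => Real.exp (-b*x^2 + c*x) := by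
  have hrw : (fun x : ℝ => Real.exp (-b*x^2 + c*x))
      = fun x : ℝ => Real.exp (c^2/(4*b)) * Real.exp (-b*(x - c/(2*b))^2) := by
    funext x
    rw [← Real.exp_add]
    apply congrArg
    field_simp
    ring
  rw [hrw]
  exact ((integrable_exp_neg_mul_sq hb).comp_sub_right (c/(2*b))).const_mul _

lemma integral_exp_quad {b : ℝ} (hb : 0 < b) (c : ℝ) :
    ∫ x : ℝ, Real.exp (-b*x^2 + c*x) = Real.sqrt (π/b) * Real.exp (c^2/(4*b)) := by
  have hrw : (fun x : ℝ => Real.exp (-b*x^2 + c*x))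
      = fun x : ℝ => Real.exp (c^2/(4*b)) * Real.exp (-b*(x - c/(2*b))^2) := by
    funext x
    rw [← Real.exp_add]
    apply congrArg
    field_simp
    ring
  rw [hrw, integral_const_mul,
    integral_sub_right_eq_self (μ := volume) (fun x => Real.exp (-b*x^2)) (c/(2*b)),
    integral_gaussian]
  ring

lemma lemB (n : ℕ) (hn : 0 < n) :
    ∑ i ∈ range (n+1), ((n.choose i : ℝ) / 2^n) * Real.exp ((2*(i:ℝ) - n)^2 / (4*n))
      ≤ Real.sqrt 2 := by
  have hn0 : (0:ℝ) < n := by exact_mod_cast hn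
  have hsqrtn : Real.sqrt n > 0 := Real.sqrt_pos.mpr hn0
  set c : ℕ → ℝ := fun i => (2*(i:ℝ) - n) / (2 * Real.sqrt n) with hc_def
  have hkey : ∀ i : ℕ, Real.exp ((2*(i:ℝ) - n)^2 / (4*n))
      = (Real.sqrt (4*π))⁻¹ * ∫ t : ℝ, Real.exp (-(1/4)*t^2 + c i * t) := by
    intro i
    rw [integral_exp_quad (by norm_num : (0:ℝ) < 1/4) (c i)]
    have h1 : (c i)^2 / (4*(1/4)) = (2*(i:ℝ) - n)^2 / (4*n) := by
      rw [hc_def]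
      have h2s : (2 * Real.sqrt n)^2 = 4 * n := by
        rw [mul_pow, Real.sq_sqrt hn0.le]; norm_num
      rw [div_pow, h2s]
      field_simp
    have h2 : π / (1/4 : ℝ) = 4*π := by norm_num; ring
    rw [h1, h2, ← mul_assoc, inv_mul_cancel₀ (by positivity), one_mul]
  have hrw : ∑ i ∈ range (n+1), ((n.choose i : ℝ) / 2^n) * Real.exp ((2*(i:ℝ) - n)^2 / (4*n))
      = (Real.sqrt (4*π))⁻¹ * ∫ t : ℝ,
          ∑ i ∈ range (n+1), ((n.choose i : ℝ) / 2^n) * Real.exp (-(1/4)*t^2 + c i * t) := by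
    rw [integral_finset_sum _ (fun i _ =>
      ((integrable_exp_quad (by norm_num : (0:ℝ) < 1/4) (c i)).const_mul _))]
    rw [Finset.mul_sum]
    apply Finset.sum_congr rfl
    intro i _
    rw [hkey i, integral_const_mul]
    ring
  rw [hrw]
  have hinteg : Integrable (fun t : ℝ => ∑ i ∈ range (n+1),
      ((n.choose i : ℝ) / 2^n) * Real.exp (-(1/4)*t^2 + c i * t)) :=
    integrable_finset_sum _ (fun i _ =>
      ((integrable_exp_quad (by norm_num : (0:ℝ) < 1/4) (c i)).const_mul _))
  have hpt : ∀ t : ℝ, ∑ i ∈ range (n+1), ((n.choose i : ℝ) / 2^n) * Real.exp (-(1/4)*t^2 + c i * t)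
      ≤ Real.exp (-(1/8)*t^2) := by
    intro t
    set u : ℝ := t / (2 * Real.sqrt n) with hu_def
    have harg : ∀ i : ℕ, c i * t = 2*(i:ℝ)*u - n*u := by
      intro i
      rw [hc_def, hu_def]
      field_simp
    have hterm : ∀ i ∈ range (n+1), ((n.choose i : ℝ) / 2^n) * Real.exp (-(1/4)*t^2 + c i * t)
        = (Real.exp (-(1/4)*t^2) * (2:ℝ)⁻¹^n * Real.exp (-((n:ℝ)*u))) *
            ((n.choose i : ℝ) * (Real.exp (2*u))^i) := by
      intro i _
      have e1 : Real.exp (-(1/4)*t^2 + c i * t)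
          = Real.exp (-(1/4)*t^2) * Real.exp (-((n:ℝ)*u)) * Real.exp ((i:ℝ)*(2*u)) := by
        rw [← Real.exp_add, ← Real.exp_add]
        apply congrArg
        rw [harg i]
        ring
      rw [e1, ← Real.exp_nat_mul, inv_pow, div_eq_mul_inv]
      ring
    rw [Finset.sum_congr rfl hterm, ← Finset.mul_sum]
    have hbinom : ∑ i ∈ range (n+1), ((n.choose i : ℝ) * (Real.exp (2*u))^i)
        = (Real.exp (2*u) + 1)^n := by
      rw [add_pow]
      apply Finset.sum_congr rfl
      intro i _
      rw [one_pow]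
      ring
    rw [hbinom]
    have h2 : Real.exp (-u) * Real.exp (2*u) = Real.exp u := by
      rw [← Real.exp_add]; apply congrArg; ring
    have hbase : Real.exp (-u) * (Real.exp (2*u) + 1) = Real.exp u + Real.exp (-u) := by
      rw [mul_add, h2, mul_one]
    have hpow : (2:ℝ)⁻¹^n * (Real.exp (-u))^n * (Real.exp (2*u) + 1)^n = (Real.cosh u)^n := by
      rw [← mul_pow, ← mul_pow]
      congr 1
      rw [Real.cosh_eq, mul_assoc, hbase]
      ring
    have hexpn : Real.exp (-((n:ℝ)*u)) = (Real.exp (-u))^n := by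
      rw [← Real.exp_nat_mul]
      apply congrArg
      ring
    have hcosh : Real.exp (-(1/4)*t^2) * (2:ℝ)⁻¹^n * Real.exp (-((n:ℝ)*u)) * (Real.exp (2*u) + 1)^n
        = Real.exp (-(1/4)*t^2) * (Real.cosh u)^n := by
      rw [hexpn, ← hpow]
      ring
    calc Real.exp (-(1/4)*t^2) * (2:ℝ)⁻¹^n * Real.exp (-((n:ℝ)*u)) * (Real.exp (2*u) + 1)^n
        = Real.exp (-(1/4)*t^2) * (Real.cosh u)^n := hcosh
      _ ≤ Real.exp (-(1/4)*t^2) * Real.exp (t^2/8) := by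
          apply mul_le_mul_of_nonneg_left _ (Real.exp_pos _).le
          have h1 : (Real.cosh u)^n ≤ (Real.exp (u^2/2))^n :=
            pow_le_pow_left₀ (Real.cosh_pos u).le (Real.cosh_le_exp_half_sq u) n
          have h2' : (Real.exp (u^2/2))^n = Real.exp ((n:ℝ)*(u^2/2)) := by
            rw [← Real.exp_nat_mul]
          have h3 : (n:ℝ)*(u^2/2) = t^2/8 := by
            rw [hu_def, div_pow, mul_pow, Real.sq_sqrt hn0.le]
            field_simp
            ring
          rw [h2', h3] at h1
          exact h1
      _ = Real.exp (-(1/8)*t^2) := by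
          rw [← Real.exp_add]
          apply congrArg
          ring
  have hint8 : Integrable (fun t : ℝ => Real.exp (-(1/8)*t^2)) := by
    have := integrable_exp_neg_mul_sq (by norm_num : (0:ℝ) < 1/8)
    simpa using this
  calc (Real.sqrt (4*π))⁻¹ * ∫ t : ℝ,
          ∑ i ∈ range (n+1), ((n.choose i : ℝ) / 2^n) * Real.exp (-(1/4)*t^2 + c i * t)
      ≤ (Real.sqrt (4*π))⁻¹ * ∫ t : ℝ, Real.exp (-(1/8)*t^2) := by
        apply mul_le_mul_of_nonneg_left _ (by positivity)
        exact integral_mono hinteg hint8 hpt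
    _ = Real.sqrt 2 := by
        have hg : ∫ t : ℝ, Real.exp (-(1/8)*t^2) = Real.sqrt (π/(1/8)) := by
          rw [← integral_gaussian]
        rw [hg]
        have h8 : π / (1/8 : ℝ) = 2 * (4*π) := by field_simp; ring
        rw [h8, Real.sqrt_mul (by norm_num : (0:ℝ) ≤ 2)]
        have h4 : Real.sqrt (4*π) ≠ 0 := by positivity
        field_simp

/-- The sum over `i = 0,...,n` of the square roots of the binomial probabilities
`2^(-n) * C(n,i)` is at most `(2πn)^(1/4)`. -/
theorem sum_sqrt_binomial_le (n : ℕ) (hn : 0 < n) :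
    ∑ i ∈ Finset.range (n+1), Real.sqrt ((n.choose i : ℝ) / 2^n)
      ≤ (2 * Real.pi * n) ^ ((1:ℝ)/4) := by
  have hn0 : (0:ℝ) < n := by exact_mod_cast hn
  set w : ℕ → ℝ := fun i => Real.exp (-((2*(i:ℝ) - n)^2 / (4*n))) with hw
  set q : ℕ → ℝ := fun i => ((n.choose i : ℝ) / 2^n) * Real.exp ((2*(i:ℝ) - n)^2 / (4*n)) with hq
  have hwq : ∀ i, w i * q i = (n.choose i : ℝ) / 2^n := by
    intro i
    rw [hw, hq]
    have : Real.exp (-((2*(i:ℝ) - n)^2 / (4*n))) * Real.exp ((2*(i:ℝ) - n)^2 / (4*n)) = 1 := by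
      rw [← Real.exp_add]
      norm_num
    calc Real.exp (-((2*(i:ℝ) - n)^2 / (4*n)))
          * (((n.choose i : ℝ) / 2^n) * Real.exp ((2*(i:ℝ) - n)^2 / (4*n)))
        = ((n.choose i : ℝ) / 2^n) * (Real.exp (-((2*(i:ℝ) - n)^2 / (4*n)))
          * Real.exp ((2*(i:ℝ) - n)^2 / (4*n))) := by ring
      _ = (n.choose i : ℝ) / 2^n := by rw [this, mul_one]
  have hsplit : ∀ i, Real.sqrt ((n.choose i : ℝ)/2^n) = Real.sqrt (w i) * Real.sqrt (q i) := by
    intro i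
    rw [← Real.sqrt_mul (Real.exp_pos _).le, hwq]
  have hCS := Real.sum_sqrt_mul_sqrt_le (range (n+1)) (f := w) (g := q)
    (fun i => (Real.exp_pos _).le) (fun i => by positivity)
  have hA := lemA n hn
  have hB := lemB n hn
  have hq_nonneg : 0 ≤ ∑ i ∈ range (n+1), q i :=
    Finset.sum_nonneg fun i _ => by positivity
  calc ∑ i ∈ Finset.range (n+1), Real.sqrt ((n.choose i : ℝ) / 2^n)
      = ∑ i ∈ range (n+1), Real.sqrt (w i) * Real.sqrt (q i) :=
        Finset.sum_congr rfl fun i _ => hsplit i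
    _ ≤ Real.sqrt (∑ i ∈ range (n+1), w i) * Real.sqrt (∑ i ∈ range (n+1), q i) := hCS
    _ ≤ Real.sqrt (Real.sqrt (π * n)) * Real.sqrt (Real.sqrt 2) := by
        apply mul_le_mul (Real.sqrt_le_sqrt hA) (Real.sqrt_le_sqrt hB)
          (Real.sqrt_nonneg _) (Real.sqrt_nonneg _)
    _ = (2 * Real.pi * n) ^ ((1:ℝ)/4) := by
        rw [← Real.sqrt_mul (Real.sqrt_nonneg _), ← Real.sqrt_mul (by positivity : (0:ℝ) ≤ π * n)]
        rw [show π * (n:ℝ) * 2 = 2 * π * n by ring]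
        rw [show (1:ℝ)/4 = (1/2)*(1/2) by norm_num,
          Real.rpow_mul (by positivity : (0:ℝ) ≤ 2 * π * n)]
        rw [← Real.sqrt_eq_rpow, ← Real.sqrt_eq_rpow]
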